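/- Let α > 0, let n ∈ ℤ, let {x_k}_{k=n-1}^∞ be a strictly increasing sequence of real numbers, and let {τ_k}_{k=n}^∞ be a geometrically decreasing sequence. Then Σ_{k=n}^∞ τ_k (∫_{x_{n-1}}^{x_k} g)^α ≈ Σ_{k=n}^∞ τ_k (∫_{x_{k-1}}^{x_k} g)^α holds for all non-negative Lebesgue measurable functions g on (x_{n-1}, ∞), with implicit constants depending only on α and the geometric-decrease ratio sup_k τ_{k+1}/τ_k. -/

import Mathlib

open MeasureTheory Set ENNReal

/-- Splitting inequality: `(a+b)^α ≤ t^α a^α + (t/(t-1))^α b^α` for `1 < t < ∞`. -/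
lemma aux_split_rpow (α : ℝ) (hα : 0 < α) (t : ℝ≥0∞) (ht1 : 1 < t) (htop : t ≠ ⊤)
    (a b : ℝ≥0∞) :
    (a + b) ^ α ≤ t ^ α * a ^ α + (t / (t - 1)) ^ α * b ^ α := by
  have hd0 : t - 1 ≠ 0 := by
    simpa [tsub_eq_zero_iff_le] using ht1.not_ge
  have hdtop : t - 1 ≠ ⊤ := ENNReal.sub_ne_top htop
  by_cases hb : b ≤ (t - 1) * a
  · have h1 : a + b ≤ t * a := by
      calc a + b ≤ a + (t - 1) * a := by gcongr
        _ = (1 + (t - 1)) * a := by ring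
        _ = t * a := by rw [add_tsub_cancel_of_le ht1.le]
    calc (a + b) ^ α ≤ (t * a) ^ α := ENNReal.rpow_le_rpow h1 hα.le
      _ = t ^ α * a ^ α := ENNReal.mul_rpow_of_nonneg _ _ hα.le
      _ ≤ _ := le_self_add
  · push_neg at hb
    have ha' : a ≤ b / (t - 1) := by
      rw [ENNReal.le_div_iff_mul_le (Or.inl hd0) (Or.inl hdtop)]
      rw [mul_comm]
      exact hb.le
    have hkey : t / (t - 1) = (t - 1)⁻¹ + 1 := by
      have h' : t = 1 + (t - 1) := (add_tsub_cancel_of_le ht1.le).symm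
      calc t / (t - 1) = (1 + (t - 1)) * (t - 1)⁻¹ := by
            rw [div_eq_mul_inv, ← h']
        _ = (t - 1)⁻¹ + (t - 1) * (t - 1)⁻¹ := by ring
        _ = (t - 1)⁻¹ + 1 := by rw [ENNReal.mul_inv_cancel hd0 hdtop]
    have h2 : a + b ≤ (t / (t - 1)) * b := by
      calc a + b ≤ b / (t - 1) + b := by gcongr
        _ = ((t - 1)⁻¹ + 1) * b := by rw [div_eq_mul_inv]; ring
        _ = (t / (t - 1)) * b := by rw [hkey]
    calc (a + b) ^ α ≤ ((t / (t - 1)) * b) ^ α := ENNReal.rpow_le_rpow h2 hα.le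
      _ = (t / (t - 1)) ^ α * b ^ α := ENNReal.mul_rpow_of_nonneg _ _ hα.le
      _ ≤ _ := le_add_self

theorem sum_sum_equiv (α : ℝ) (hα : 0 < α) (ρ : ℝ≥0∞) (hρ : ρ < 1) :
    ∃ c₁ c₂ : ℝ≥0∞, 0 < c₁ ∧ c₂ < ⊤ ∧
      ∀ (n : ℤ) (x : ℤ → ℝ) (τ : ℤ → ℝ≥0∞),
        (∀ k : ℤ, n - 1 ≤ k → x k < x (k + 1)) →
        (∀ k : ℤ, n ≤ k → 0 < τ k ∧ τ k < ⊤) →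
        (∀ k : ℤ, n ≤ k → τ (k + 1) ≤ ρ * τ k) →
        ∀ g : ℝ → ℝ≥0∞, Measurable g →
          c₁ * (∑' j : ℕ, τ (n + j) * (∫⁻ s in Ioo (x (n - 1)) (x (n + j)), g s) ^ α) ≤
              (∑' j : ℕ, τ (n + j) * (∫⁻ s in Ioo (x (n + j - 1)) (x (n + j)), g s) ^ α) ∧
            (∑' j : ℕ, τ (n + j) * (∫⁻ s in Ioo (x (n + j - 1)) (x (n + j)), g s) ^ α) ≤
              c₂ * ∑' j : ℕ, τ (n + j) * (∫⁻ s in Ioo (x (n - 1)) (x (n + j)), g s) ^ α := by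
  obtain ⟨σ, hρσ, hσ1⟩ := exists_between hρ
  have hσ0 : σ ≠ 0 := ((zero_le : (0:ℝ≥0∞) ≤ ρ).trans_lt hρσ).ne'
  have hσtop : σ ≠ ⊤ := (hσ1.trans one_lt_top).ne
  set ρ' : ℝ≥0∞ := max ρ (σ / 2) with hρ'def
  have hρ'0 : ρ' ≠ 0 := by
    have h2 : σ / 2 ≠ 0 := by simp [ENNReal.div_eq_zero_iff, hσ0]
    exact fun h => h2 (le_antisymm (h ▸ le_max_right _ _) zero_le)
  have hρ'top : ρ' ≠ ⊤ :=
    (max_lt (hρ.trans_le le_top) (ENNReal.div_lt_top hσtop (by norm_num))).ne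
  have hρ'σ : ρ' < σ := max_lt hρσ (ENNReal.half_lt_self hσ0 hσtop)
  have hρρ' : ρ ≤ ρ' := le_max_left _ _
  set K : ℝ≥0∞ := σ / ρ' with hKdef
  have hK1 : 1 < K := by
    rw [hKdef, ENNReal.lt_div_iff_mul_lt (Or.inl hρ'0) (Or.inl hρ'top)]
    simpa using hρ'σ
  have hKtop : K ≠ ⊤ := (ENNReal.div_lt_top hσtop hρ'0).ne
  have hKρ : K * ρ ≤ σ := by
    calc K * ρ ≤ K * ρ' := by gcongr
      _ = σ := ENNReal.div_mul_cancel hρ'0 hρ'top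
  set t : ℝ≥0∞ := K ^ α⁻¹ with htdef
  have htK : t ^ α = K := by
    rw [htdef, ← ENNReal.rpow_mul, inv_mul_cancel₀ hα.ne', ENNReal.rpow_one]
  have ht1 : 1 < t := ENNReal.one_lt_rpow hK1 (inv_pos.2 hα)
  have httop : t ≠ ⊤ := ENNReal.rpow_ne_top_of_nonneg (inv_nonneg.2 hα.le) hKtop
  have hd0 : t - 1 ≠ 0 := by simpa [tsub_eq_zero_iff_le] using ht1.not_ge
  have hdtop : t - 1 ≠ ⊤ := ENNReal.sub_ne_top httop
  set C : ℝ≥0∞ := (t / (t - 1)) ^ α with hCdef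
  have hfrac0 : t / (t - 1) ≠ 0 := by
    simp [ENNReal.div_eq_zero_iff, hdtop, (one_pos.trans ht1).ne']
  have hfractop : t / (t - 1) ≠ ⊤ := (ENNReal.div_lt_top httop hd0).ne
  have hC0 : C ≠ 0 := by
    simp [hCdef, ENNReal.rpow_eq_zero_iff, hfrac0, hfractop, hα, hα.le, not_lt.2 hα.le]
  have hCtop : C ≠ ⊤ := ENNReal.rpow_ne_top_of_nonneg hα.le hfractop
  have hC1 : 1 ≤ C := by
    have h1 : (1 : ℝ≥0∞) ≤ t / (t - 1) := by
      rw [ENNReal.le_div_iff_mul_le (Or.inl hd0) (Or.inl hdtop), one_mul]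
      exact tsub_le_self
    calc (1 : ℝ≥0∞) = 1 ^ α := (ENNReal.one_rpow α).symm
      _ ≤ C := by rw [hCdef]; exact ENNReal.rpow_le_rpow h1 hα.le
  refine ⟨C⁻¹ * (1 - σ), 1, ?_, one_lt_top, ?_⟩
  · exact ENNReal.mul_pos (ENNReal.inv_ne_zero.2 hCtop) (tsub_pos_of_lt hσ1).ne'
  intro n x τ hx hτ hτρ g hg
  have hmono : ∀ k : ℤ, n - 1 ≤ k → ∀ l : ℤ, k ≤ l → x k ≤ x l := by
    intro k hk l hkl
    refine Int.le_induction (motive := fun l _ => x k ≤ x l) ?_ ?_ l hkl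
    · exact le_refl _
    · intro m hm ih
      exact ih.trans (hx m (hk.trans hm)).le
  have hsplit : ∀ u v w : ℝ,
      (∫⁻ s in Ioo u w, g s) ≤ (∫⁻ s in Ioo u v, g s) + ∫⁻ s in Ioo v w, g s := by
    intro u v w
    have hsub : Ioo u w ⊆ Ioo u v ∪ Ico v w := by
      intro s hs
      rcases lt_or_ge s v with h | h
      · exact Or.inl ⟨hs.1, h⟩
      · exact Or.inr ⟨h, hs.2⟩
    calc (∫⁻ s in Ioo u w, g s) ≤ ∫⁻ s in Ioo u v ∪ Ico v w, g s := lintegral_mono_set hsub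
      _ ≤ (∫⁻ s in Ioo u v, g s) + ∫⁻ s in Ico v w, g s := lintegral_union_le _ _ _
      _ = _ := by rw [setLIntegral_congr (Ioo_ae_eq_Ico (μ := volume) (a := v) (b := w)).symm]
  constructor
  · -- hard direction
    by_cases hfin : ∀ j : ℕ, (∫⁻ s in Ioo (x (n - 1)) (x (n + j)), g s) ≠ ⊤
    · -- all partial integrals finite
      set F : ℕ → ℝ≥0∞ := fun j =>
        τ (n + j) * (∫⁻ s in Ioo (x (n - 1)) (x (n + j)), g s) ^ α with hF
      set G : ℕ → ℝ≥0∞ := fun j =>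
        τ (n + j) * (∫⁻ s in Ioo (x (n + j - 1)) (x (n + j)), g s) ^ α with hG
      set T : ℝ≥0∞ := ∑' j, G j with hT
      have hstep : ∀ j : ℕ, F (j + 1) ≤ σ * F j + C * G (j + 1) := by
        intro j
        have e1 : (n : ℤ) + ((j + 1 : ℕ) : ℤ) = (n + j) + 1 := by push_cast; ring
        have e2 : (n : ℤ) + ((j + 1 : ℕ) : ℤ) - 1 = n + j := by push_cast; ring
        have hτ' : τ (n + ((j + 1 : ℕ) : ℤ)) ≤ ρ * τ (n + j) := by
          rw [e1]
          exact hτρ (n + j) (le_add_of_nonneg_right (Int.ofNat_nonneg j))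
        have hA : (∫⁻ s in Ioo (x (n - 1)) (x (n + ((j + 1 : ℕ) : ℤ))), g s) ≤
            (∫⁻ s in Ioo (x (n - 1)) (x (n + j)), g s) +
              ∫⁻ s in Ioo (x (n + ((j + 1 : ℕ) : ℤ) - 1)) (x (n + ((j + 1 : ℕ) : ℤ))), g s := by
          rw [e2]
          exact hsplit (x (n - 1)) (x (n + j)) (x (n + ((j + 1 : ℕ) : ℤ)))
        have hrwF : F (j + 1) = τ (n + ((j + 1 : ℕ) : ℤ)) *
            (∫⁻ s in Ioo (x (n - 1)) (x (n + ((j + 1 : ℕ) : ℤ))), g s) ^ α := by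
          rw [hF]
        have hrwG : G (j + 1) = τ (n + ((j + 1 : ℕ) : ℤ)) *
            (∫⁻ s in Ioo (x (n + ((j + 1 : ℕ) : ℤ) - 1)) (x (n + ((j + 1 : ℕ) : ℤ))), g s) ^ α := by
          rw [hG]
        calc F (j + 1) ≤ τ (n + ((j + 1 : ℕ) : ℤ)) *
              ((∫⁻ s in Ioo (x (n - 1)) (x (n + j)), g s) +
                (∫⁻ s in Ioo (x (n + ((j + 1 : ℕ) : ℤ) - 1)) (x (n + ((j + 1 : ℕ) : ℤ))), g s)) ^ α := by
              rw [hrwF]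
              exact mul_le_mul_right (ENNReal.rpow_le_rpow hA hα.le) _
          _ ≤ τ (n + ((j + 1 : ℕ) : ℤ)) *
              (K * (∫⁻ s in Ioo (x (n - 1)) (x (n + j)), g s) ^ α +
                C * (∫⁻ s in Ioo (x (n + ((j + 1 : ℕ) : ℤ) - 1)) (x (n + ((j + 1 : ℕ) : ℤ))), g s) ^ α) := by
              refine mul_le_mul_right ?_ _
              have h := aux_split_rpow α hα t ht1 httop
                (∫⁻ s in Ioo (x (n - 1)) (x (n + j)), g s)
                (∫⁻ s in Ioo (x (n + ((j + 1 : ℕ) : ℤ) - 1)) (x (n + ((j + 1 : ℕ) : ℤ))), g s)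
              rwa [htK, ← hCdef] at h
          _ = K * (τ (n + ((j + 1 : ℕ) : ℤ)) *
                (∫⁻ s in Ioo (x (n - 1)) (x (n + j)), g s) ^ α) + C * G (j + 1) := by
              rw [hrwG]; ring
          _ ≤ K * ((ρ * τ (n + j)) * (∫⁻ s in Ioo (x (n - 1)) (x (n + j)), g s) ^ α) +
              C * G (j + 1) := by gcongr
          _ = (K * ρ) * F j + C * G (j + 1) := by rw [hF]; ring
          _ ≤ σ * F j + C * G (j + 1) :=
              add_le_add (mul_le_mul_left hKρ _) le_rfl
      have hbase : F 0 ≤ C * G 0 := by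
        have h0 : ((n : ℤ) + ((0 : ℕ) : ℤ) - 1) = n - 1 := by push_cast; ring
        have hFG : F 0 = G 0 := by simp only [hF, hG, h0]
        rw [hFG]
        exact le_mul_of_one_le_left zero_le hC1
      have hSN : ∀ N : ℕ, (∑ j ∈ Finset.range N, F j) ≤
          σ * (∑ j ∈ Finset.range N, F j) + C * T := by
        intro N
        have h1 : (∑ j ∈ Finset.range (N + 1), F j) ≤
            σ * (∑ j ∈ Finset.range N, F j) + C * (∑ j ∈ Finset.range (N + 1), G j) := by
          rw [Finset.sum_range_succ' F N, Finset.sum_range_succ' G N]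
          calc (∑ j ∈ Finset.range N, F (j + 1)) + F 0 ≤
              (∑ j ∈ Finset.range N, (σ * F j + C * G (j + 1))) + C * G 0 :=
                add_le_add (Finset.sum_le_sum fun j _ => hstep j) hbase
            _ = σ * (∑ j ∈ Finset.range N, F j) +
                C * ((∑ j ∈ Finset.range N, G (j + 1)) + G 0) := by
                rw [Finset.sum_add_distrib, Finset.mul_sum, mul_add, Finset.mul_sum, add_assoc]
        have h2 : (∑ j ∈ Finset.range N, F j) ≤ ∑ j ∈ Finset.range (N + 1), F j :=
          Finset.sum_le_sum_of_subset (Finset.range_subset_range.2 (Nat.le_succ N))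
        have h3 : (∑ j ∈ Finset.range (N + 1), G j) ≤ T := ENNReal.sum_le_tsum _
        calc (∑ j ∈ Finset.range N, F j) ≤ ∑ j ∈ Finset.range (N + 1), F j := h2
          _ ≤ σ * (∑ j ∈ Finset.range N, F j) + C * (∑ j ∈ Finset.range (N + 1), G j) := h1
          _ ≤ σ * (∑ j ∈ Finset.range N, F j) + C * T := by gcongr
      have hSNfin : ∀ N : ℕ, (∑ j ∈ Finset.range N, F j) ≠ ⊤ := by
        intro N
        refine (ENNReal.sum_lt_top.2 fun j _ => ?_).ne
        rw [hF]
        exact ENNReal.mul_lt_top (hτ _ (le_add_of_nonneg_right (Int.ofNat_nonneg j))).2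
          (ENNReal.rpow_lt_top_of_nonneg hα.le (hfin j))
      have hfinal : ∀ N : ℕ, (C⁻¹ * (1 - σ)) * (∑ j ∈ Finset.range N, F j) ≤ T := by
        intro N
        have hsub : (∑ j ∈ Finset.range N, F j) - σ * (∑ j ∈ Finset.range N, F j) ≤ C * T := by
          rw [tsub_le_iff_right, add_comm]
          exact hSN N
        have heq : (1 - σ) * (∑ j ∈ Finset.range N, F j) =
            (∑ j ∈ Finset.range N, F j) - σ * (∑ j ∈ Finset.range N, F j) := by
          rw [ENNReal.sub_mul (fun _ _ => hSNfin N), one_mul]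
        calc (C⁻¹ * (1 - σ)) * (∑ j ∈ Finset.range N, F j)
            = C⁻¹ * ((1 - σ) * (∑ j ∈ Finset.range N, F j)) := by ring
          _ ≤ C⁻¹ * (C * T) := by rw [heq]; exact mul_le_mul_right hsub _
          _ = (C⁻¹ * C) * T := by ring
          _ = T := by rw [ENNReal.inv_mul_cancel hC0 hCtop, one_mul]
      calc (C⁻¹ * (1 - σ)) * ∑' j : ℕ, F j
          = ⨆ N : ℕ, (C⁻¹ * (1 - σ)) * ∑ j ∈ Finset.range N, F j := by
            rw [ENNReal.tsum_eq_iSup_nat, ENNReal.mul_iSup]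
        _ ≤ T := iSup_le hfinal
    · -- some integral is infinite: RHS is ⊤
      push_neg at hfin
      obtain ⟨j, hj⟩ := hfin
      have hAsum : ∀ j : ℕ, (∫⁻ s in Ioo (x (n - 1)) (x (n + j)), g s) ≤
          ∑ i ∈ Finset.range (j + 1), ∫⁻ s in Ioo (x (n + i - 1)) (x (n + i)), g s := by
        intro j
        induction j with
        | zero =>
          have h0 : ((n : ℤ) + ((0 : ℕ) : ℤ) - 1) = n - 1 := by push_cast; ring
          simp only [zero_add, Finset.sum_range_one, Nat.cast_zero, add_zero, h0]
          exact le_refl _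
        | succ j ih =>
          have hid : ((n : ℤ) + ((j + 1 : ℕ) : ℤ) - 1) = n + j := by push_cast; ring
          calc (∫⁻ s in Ioo (x (n - 1)) (x (n + ((j + 1 : ℕ) : ℤ))), g s) ≤
              (∫⁻ s in Ioo (x (n - 1)) (x (n + j)), g s) +
                ∫⁻ s in Ioo (x (n + j)) (x (n + ((j + 1 : ℕ) : ℤ))), g s :=
              hsplit _ _ _
            _ ≤ (∑ i ∈ Finset.range (j + 1), ∫⁻ s in Ioo (x (n + i - 1)) (x (n + i)), g s) +
                ∫⁻ s in Ioo (x (n + ((j + 1 : ℕ) : ℤ) - 1)) (x (n + ((j + 1 : ℕ) : ℤ))), g s := by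
              rw [hid]; gcongr
            _ = ∑ i ∈ Finset.range (j + 1 + 1), ∫⁻ s in Ioo (x (n + i - 1)) (x (n + i)), g s :=
              (Finset.sum_range_succ _ (j + 1)).symm
      have hs : (∑ i ∈ Finset.range (j + 1), ∫⁻ s in Ioo (x (n + i - 1)) (x (n + i)), g s) = ⊤ :=
        top_unique (hj ▸ hAsum j)
      obtain ⟨i, _, hi⟩ := ENNReal.sum_eq_top.1 hs
      have hTi : τ (n + i) * (∫⁻ s in Ioo (x (n + i - 1)) (x (n + i)), g s) ^ α = ⊤ := by
        rw [hi, ENNReal.top_rpow_of_pos hα,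
          ENNReal.mul_top (hτ _ (le_add_of_nonneg_right (Int.ofNat_nonneg i))).1.ne']
      have hTtop : (∑' j : ℕ, τ (n + j) *
          (∫⁻ s in Ioo (x (n + j - 1)) (x (n + j)), g s) ^ α) = ⊤ :=
        top_unique (hTi ▸ ENNReal.le_tsum i)
      rw [hTtop]
      exact le_top
  · -- easy direction
    rw [one_mul]
    refine ENNReal.tsum_le_tsum fun j => ?_
    refine mul_le_mul_right (ENNReal.rpow_le_rpow ?_ hα.le) _
    refine lintegral_mono_set (Ioo_subset_Ioo_left ?_)
    exact hmono (n - 1) le_rfl (n + j - 1) (by omega)
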